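/- Let V be a category with small products and finite coproducts and let A₁,…,Aₙ and B be V-enriched graphs. Then morphisms F : ⊛ᵢAᵢ → B of V-graphs are in bijection, naturally in B, with families (f₀, f_{z,a,b}) consisting of: a function f₀ : ∏ᵢ A_{i,0} → B₀, together with, for each 1 ≤ i* ≤ n, each tuple z ∈ ∏_{i ≠ i*} A_{i,0} and each pair a, b ∈ A_{i*,0}, a morphism f_{z,a,b} : A_{i*}(a,b) → B(f₀(z|_{i*}a), f₀(z|_{i*}b)) in V, where z|_{i*}a denotes the tuple obtained from z by inserting a in position i*. The bijection sends F to the family with f₀ the object map of F and f_{z,a,b} the hom map of F at (z|_{i*}a, z|_{i*}b), precomposed with the i*-th coproduct injection into ∐ᵢ Aᵢ(aᵢ,aᵢ) when a = b. -/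

import Mathlib

open CategoryTheory Limits

universe v u

attribute [local instance] Classical.propDecidable

/-- A `V`-enriched graph: a set of objects together with an object of `V` for each
ordered pair of objects. -/
structure VGraph (V : Type u) [Category.{v} V] where
  carrier : Type v
  hom : carrier → carrier → V

namespace VGraph

variable {V : Type u} [Category.{v} V]

/-- A morphism of `V`-enriched graphs: a function on objects together with hom maps. -/
structure Hom (X Y : VGraph V) where
  obj : X.carrier → Y.carrier
  map : ∀ a b : X.carrier, X.hom a b ⟶ Y.hom (obj a) (obj b)

theorem Hom.mk_eq {X Y : VGraph V} (o : X.carrier → Y.carrier)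
    (m m' : ∀ a b : X.carrier, X.hom a b ⟶ Y.hom (o a) (o b))
    (h : ∀ a b, m a b = m' a b) : Hom.mk o m = Hom.mk o m' := by
  have : m = m' := funext fun a => funext fun b => h a b
  rw [this]

instance : Category (VGraph V) where
  Hom := Hom
  id X := ⟨fun a => a, fun _ _ => 𝟙 _⟩
  comp f g := ⟨fun a => g.obj (f.obj a), fun a b => f.map a b ≫ g.map _ _⟩
  id_comp f := Hom.mk_eq f.obj (fun a b => 𝟙 _ ≫ f.map a b) f.map
    (fun _ _ => Category.id_comp _)
  comp_id f := Hom.mk_eq f.obj (fun a b => f.map a b ≫ 𝟙 _) f.map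
    (fun _ _ => Category.comp_id _)
  assoc f g h := Hom.mk_eq _
    (fun a b => (f.map a b ≫ g.map _ _) ≫ h.map _ _)
    (fun a b => f.map a b ≫ (g.map _ _ ≫ h.map _ _))
    (fun _ _ => Category.assoc _ _ _)

/-- The object map of a morphism of `V`-graphs, as a morphism in the category. -/
abbrev obj' {X Y : VGraph V} (f : X ⟶ Y) : X.carrier → Y.carrier := Hom.obj f

/-- The binary free product of `V`-enriched graphs. -/
noncomputable def freeProd [HasBinaryCoproducts V] [HasInitial V]
    (A B : VGraph V) : VGraph V where
  carrier := A.carrier × B.carrier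
  hom x y :=
    if x = y then A.hom x.1 y.1 ⨿ B.hom x.2 y.2
    else if x.2 = y.2 then A.hom x.1 y.1
    else if x.1 = y.1 then B.hom x.2 y.2
    else ⊥_ V

/-- The unit `V`-graph `0`, with a single object and hom the initial object. -/
noncomputable def unitGraph [HasInitial V] : VGraph V :=
  ⟨PUnit, fun _ _ => ⊥_ V⟩

/-- The internal hom of `V`-graphs: objects are `V`-graph morphisms `A ⟶ B` and homs
are the products `∏_{a ∈ A} B(f a, g a)`. -/
noncomputable def homGraph [HasProducts.{v} V] (A B : VGraph V) : VGraph V where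
  carrier := A ⟶ B
  hom f g := ∏ᶜ fun a : A.carrier => B.hom (f.obj a) (g.obj a)

end VGraph

namespace VGraph

variable {V : Type u} [Category.{v} V] {n : ℕ}

/-- Insertion of `a` in position `i₀` into a tuple `z` defined away from `i₀`. -/
def ins (A : Fin n → VGraph V) (i₀ : Fin n) (z : ∀ i, i ≠ i₀ → (A i).carrier)
    (a : (A i₀).carrier) : ∀ i, (A i).carrier := fun i =>
  if h : i = i₀ then cast (congrArg (fun j => (A j).carrier) h).symm a else z i h

theorem ins_self (A : Fin n → VGraph V) (i₀ : Fin n)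
    (z : ∀ i, i ≠ i₀ → (A i).carrier) (a : (A i₀).carrier) :
    ins A i₀ z a i₀ = a := by
  simp [ins]

theorem ins_ne (A : Fin n → VGraph V) (i₀ : Fin n)
    (z : ∀ i, i ≠ i₀ → (A i).carrier) (a : (A i₀).carrier) {i : Fin n} (h : i ≠ i₀) :
    ins A i₀ z a i = z i h := by
  simp [ins, h]

/-- The `n`-ary free product of `V`-enriched graphs: the object set is the product of
the object sets, and the hom from `a` to `b` is `∐ᵢ Aᵢ(aᵢ,bᵢ)` when `a = b`,
is `A_j(a_j,b_j)` when `aᵢ = bᵢ` for all `i ≠ j`, and is initial otherwise. -/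
noncomputable def freeProdN [HasFiniteCoproducts V] (A : Fin n → VGraph V) :
    VGraph V where
  carrier := ∀ i, (A i).carrier
  hom a b :=
    if a = b then ∐ fun i => (A i).hom (a i) (b i)
    else if h : ∃ j, ∀ i, i ≠ j → a i = b i then
      (A h.choose).hom (a h.choose) (b h.choose)
    else ⊥_ V

theorem freeProdN_hom_self [HasFiniteCoproducts V] (A : Fin n → VGraph V)
    (x : ∀ i, (A i).carrier) :
    (freeProdN A).hom x x = ∐ fun i => (A i).hom (x i) (x i) := by
  simp [freeProdN]

theorem freeProdN_hom_ins [HasFiniteCoproducts V] (A : Fin n → VGraph V) (i₀ : Fin n)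
    (z : ∀ i, i ≠ i₀ → (A i).carrier) (a b : (A i₀).carrier) (hab : a ≠ b) :
    (freeProdN A).hom (ins A i₀ z a) (ins A i₀ z b) = (A i₀).hom a b := by
  have hne : ins A i₀ z a ≠ ins A i₀ z b := fun e =>
    hab (by rw [← ins_self A i₀ z a, ← ins_self A i₀ z b, e])
  have hex : ∃ j, ∀ i, i ≠ j → ins A i₀ z a i = ins A i₀ z b i :=
    ⟨i₀, fun i hi => by rw [ins_ne A i₀ z a hi, ins_ne A i₀ z b hi]⟩
  have hch : hex.choose = i₀ := by
    by_contra hc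
    exact hab (by
      have := hex.choose_spec i₀ (fun e => hc e.symm)
      rwa [ins_self, ins_self] at this)
  show (if _ then _ else _) = _
  rw [if_neg hne, dif_pos hex]
  generalize hq : hex.choose = j
  rw [hq] at hch
  subst hch
  rw [ins_self, ins_self]

/-- A family of "hom maps in each variable separately" out of a family of graphs:
an object map together with, for each variable `i₀`, each point `z` of the remaining
graphs and each pair of objects of `A i₀`, a single hom map in `V`. -/
structure FPFam (A : Fin n → VGraph V) (B : VGraph V) where
  obj : (∀ i, (A i).carrier) → B.carrier
  map : ∀ (i₀ : Fin n) (z : ∀ i, i ≠ i₀ → (A i).carrier) (a b : (A i₀).carrier),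
    (A i₀).hom a b ⟶ B.hom (obj (ins A i₀ z a)) (obj (ins A i₀ z b))

/-- The canonical map `(A i₀)(a,b) ⟶ (⊛A)(z|a, z|b)`: the `i₀`-th coproduct
injection when `a = b`, and the canonical identification otherwise. -/
noncomputable def fpIncl [HasFiniteCoproducts V] (A : Fin n → VGraph V) (i₀ : Fin n)
    (z : ∀ i, i ≠ i₀ → (A i).carrier) (a b : (A i₀).carrier) :
    (A i₀).hom a b ⟶ (freeProdN A).hom (ins A i₀ z a) (ins A i₀ z b) :=
  if h : a = b then
    eqToHom (by rw [ins_self, ins_self]) ≫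
      Sigma.ι (fun i => (A i).hom (ins A i₀ z a i) (ins A i₀ z b i)) i₀ ≫
      eqToHom (by subst h; exact (freeProdN_hom_self A (ins A i₀ z a)).symm)
  else eqToHom (freeProdN_hom_ins A i₀ z a b h).symm

/-- The family associated to a morphism of `V`-graphs out of the free product:
its object map, together with its hom maps at the pairs `(z|a, z|b)`, precomposed
with the `i₀`-th coproduct injection when `a = b`. -/
noncomputable def toFam [HasFiniteCoproducts V] (A : Fin n → VGraph V) (B : VGraph V)
    (F : freeProdN A ⟶ B) : FPFam A B where
  obj := F.obj
  map i₀ z a b := fpIncl A i₀ z a b ≫ F.map _ _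

/-- Postcomposition of a family by a morphism of `V`-graphs. -/
def FPFam.post {A : Fin n → VGraph V} {B B' : VGraph V} (g : B ⟶ B')
    (P : FPFam A B) : FPFam A B' where
  obj := fun x => g.obj (P.obj x)
  map i₀ z a b := P.map i₀ z a b ≫ g.map _ _

end VGraph

open VGraph


namespace VGraph

variable {V : Type u} [Category.{v} V] {n : ℕ}

/-- Restriction of a tuple away from `i₀`. -/
def res (A : Fin n → VGraph V) (i₀ : Fin n) (a : ∀ i, (A i).carrier) :
    ∀ i, i ≠ i₀ → (A i).carrier := fun i _ => a i

theorem ins_res (A : Fin n → VGraph V) (i₀ : Fin n) (a : ∀ i, (A i).carrier) :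
    ins A i₀ (res A i₀ a) (a i₀) = a := by
  funext i
  by_cases h : i = i₀
  · subst h; rw [ins_self]
  · rw [ins_ne _ _ _ _ h]; rfl

theorem ins_res' (A : Fin n → VGraph V) (j : Fin n) (a b : ∀ i, (A i).carrier)
    (hj : ∀ i, i ≠ j → a i = b i) : ins A j (res A j a) (b j) = b := by
  funext i
  by_cases h : i = j
  · subst h; rw [ins_self]
  · rw [ins_ne _ _ _ _ h]; exact hj i h

theorem res_ins (A : Fin n → VGraph V) (i₀ : Fin n)
    (z : ∀ i, i ≠ i₀ → (A i).carrier) (a : (A i₀).carrier) :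
    res A i₀ (ins A i₀ z a) = z := by
  funext i hi
  exact ins_ne A i₀ z a hi

theorem map_congr {X Y : VGraph V} (o : X.carrier → Y.carrier)
    (m : ∀ a b : X.carrier, X.hom a b ⟶ Y.hom (o a) (o b)) {a a' b b' : X.carrier}
    (ha : a = a') (hb : b = b') :
    m a b = eqToHom (by rw [ha, hb]) ≫ m a' b' ≫ eqToHom (by rw [ha, hb]) := by
  subst ha; subst hb; simp

theorem fam_map_congr {A : Fin n → VGraph V} {B : VGraph V} (P : FPFam A B)
    (i₀ : Fin n) {z z' : ∀ i, i ≠ i₀ → (A i).carrier} (hz : z = z')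
    {a a' b b' : (A i₀).carrier} (ha : a = a') (hb : b = b') :
    P.map i₀ z a b =
      eqToHom (by rw [ha, hb]) ≫ P.map i₀ z' a' b' ≫ eqToHom (by rw [hz, ha, hb]) := by
  subst hz; subst ha; subst hb; simp

theorem fpfam_ext {A : Fin n → VGraph V} {B : VGraph V} {P Q : FPFam A B}
    (h0 : P.obj = Q.obj)
    (h : ∀ (i₀ : Fin n) (z : ∀ i, i ≠ i₀ → (A i).carrier) (a b : (A i₀).carrier),
      P.map i₀ z a b = Q.map i₀ z a b ≫ eqToHom (by rw [h0])) : P = Q := by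
  obtain ⟨o, m⟩ := P
  obtain ⟨o', m'⟩ := Q
  replace h0 : o = o' := h0
  subst h0
  have hm : m = m' := by
    funext i₀ z a b
    have := h i₀ z a b
    simpa using this
  rw [hm]

theorem fpfam_map_eq {A : Fin n → VGraph V} {B : VGraph V} {P Q : FPFam A B}
    (h : P = Q) (i₀ : Fin n) (z : ∀ i, i ≠ i₀ → (A i).carrier) (a b : (A i₀).carrier) :
    P.map i₀ z a b = Q.map i₀ z a b ≫ eqToHom (by rw [h]) := by
  subst h; simp

theorem fpIncl_self [HasFiniteCoproducts V] (A : Fin n → VGraph V) (i₀ : Fin n)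
    (z : ∀ i, i ≠ i₀ → (A i).carrier) (a : (A i₀).carrier) {x : ∀ i, (A i).carrier}
    (hx : ins A i₀ z a = x) :
    fpIncl A i₀ z a a =
      eqToHom (show (A i₀).hom a a = (A i₀).hom (x i₀) (x i₀) by rw [← hx, ins_self]) ≫
      Sigma.ι (fun i => (A i).hom (x i) (x i)) i₀ ≫
      eqToHom (show (∐ fun i => (A i).hom (x i) (x i)) =
          (freeProdN A).hom (ins A i₀ z a) (ins A i₀ z a) by
        rw [hx, ← freeProdN_hom_self]) := by
  subst hx
  simp only [fpIncl]
  rw [dif_pos trivial]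

theorem fpIncl_ne [HasFiniteCoproducts V] (A : Fin n → VGraph V) (i₀ : Fin n)
    (z : ∀ i, i ≠ i₀ → (A i).carrier) (a b : (A i₀).carrier) (hab : a ≠ b) :
    fpIncl A i₀ z a b = eqToHom (freeProdN_hom_ins A i₀ z a b hab).symm := by
  simp only [fpIncl]
  rw [dif_neg hab]

/-- The second branch of the inverse construction, abstracted over the index. -/
noncomputable def ofFamAux [HasFiniteCoproducts V] {A : Fin n → VGraph V} {B : VGraph V}
    (P : FPFam A B) (j : Fin n) (a b : ∀ i, (A i).carrier)
    (hj : ∀ i, i ≠ j → a i = b i)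
    (e : (freeProdN A).hom a b = (A j).hom (a j) (b j)) :
    (freeProdN A).hom a b ⟶ B.hom (P.obj a) (P.obj b) :=
  eqToHom e ≫ P.map j (res A j a) (a j) (b j) ≫
    eqToHom (by rw [ins_res, ins_res' A j a b hj])

theorem ofFamAux_congr [HasFiniteCoproducts V] {A : Fin n → VGraph V} {B : VGraph V}
    (P : FPFam A B) {j j' : Fin n} (hjj : j = j') (a b : ∀ i, (A i).carrier)
    (hj : ∀ i, i ≠ j → a i = b i)
    (e : (freeProdN A).hom a b = (A j).hom (a j) (b j)) :
    ofFamAux P j a b hj e =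
      ofFamAux P j' a b (fun i hi => hj i (hjj ▸ hi)) (hjj ▸ e) := by
  subst hjj; rfl

/-- The inverse construction: from a family to a morphism out of the free product. -/
noncomputable def ofFam [HasFiniteCoproducts V] (A : Fin n → VGraph V) (B : VGraph V)
    (P : FPFam A B) : freeProdN A ⟶ B where
  obj := P.obj
  map a b :=
    if h : a = b then
      eqToHom (show (freeProdN A).hom a b = ∐ fun i => (A i).hom (a i) (b i) by
        subst h; exact freeProdN_hom_self A a) ≫
      Sigma.desc (fun i => P.map i (res A i a) (a i) (b i) ≫
        eqToHom (by subst h; rw [ins_res A i a]))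
    else if h2 : ∃ j, ∀ i, i ≠ j → a i = b i then
      ofFamAux P h2.choose a b h2.choose_spec (by
        simp only [freeProdN, dif_pos h2]
        exact if_neg h)
    else
      eqToHom (show (freeProdN A).hom a b = ⊥_ V by
        simp only [freeProdN, dif_neg h2]
        exact if_neg h) ≫ initial.to _


theorem bot_hom_ext [HasInitial V] {X Y : V} (h : X = ⊥_ V) (f g : X ⟶ Y) : f = g := by
  subst h; exact Limits.initial.hom_ext f g

theorem comp_obj {X Y Z : VGraph V} (f : X ⟶ Y) (g : Y ⟶ Z) (a : X.carrier) :
    Hom.obj (f ≫ g) a = g.obj (f.obj a) := rfl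

theorem comp_map {X Y Z : VGraph V} (f : X ⟶ Y) (g : Y ⟶ Z) (a b : X.carrier) :
    Hom.map (f ≫ g) a b = f.map a b ≫ g.map _ _ := rfl

theorem ofFam_toFam [HasProducts.{v} V] [HasFiniteCoproducts V] (A : Fin n → VGraph V)
    (B : VGraph V) (F : freeProdN A ⟶ B) : ofFam A B (toFam A B F) = F := by
  refine Hom.mk_eq F.obj _ F.map fun a b => ?_
  by_cases hab : a = b
  · subst hab
    show (if _ : _ then _ else _) = _
    refine (dif_pos rfl).trans ?_
    refine (eqToHom_comp_iff _ _ _).mpr ?_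
    apply Sigma.hom_ext
    intro i
    rw [Sigma.ι_desc]
    simp only [toFam]
    rw [fpIncl_self A i (res A i a) (a i) (ins_res A i a)]
    rw [map_congr (Hom.obj F) (Hom.map F) (ins_res A i a) (ins_res A i a)]
    simp
    congr 2
    exact (fun {X Y Z : V} (f : X ⟶ Y) (p : Y = Z) (q : Z = Y) =>
      (by simp : f ≫ eqToHom p ≫ eqToHom q = f)) _ _ _
  · show (if _ : _ then _ else _) = _
    refine (dif_neg hab).trans ?_
    by_cases h2 : ∃ j, ∀ i, i ≠ j → a i = b i
    · simp only [dif_pos h2]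
      have haj : a h2.choose ≠ b h2.choose := by
        intro hc
        apply hab
        funext i
        by_cases hi : i = h2.choose
        · subst hi; exact hc
        · exact h2.choose_spec i hi
      simp only [ofFamAux, toFam]
      rw [fpIncl_ne A h2.choose (res A h2.choose a) _ _ haj]
      rw [map_congr (Hom.obj F) (Hom.map F) (ins_res A h2.choose a)
        (ins_res' A h2.choose a b h2.choose_spec)]
      simp
      exact (fun {X Y Z : V} (f : X ⟶ Y) (p : Y = Z) (q : Z = Y) =>
        (by simp : f ≫ eqToHom p ≫ eqToHom q = f)) _ _ _
    · simp only [dif_neg h2]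
      have e : (freeProdN A).hom a b = ⊥_ V := by
        simp only [freeProdN, dif_neg h2]
        exact if_neg hab
      exact bot_hom_ext e _ _

theorem toFam_ofFam [HasProducts.{v} V] [HasFiniteCoproducts V] (A : Fin n → VGraph V)
    (B : VGraph V) (P : FPFam A B) : toFam A B (ofFam A B P) = P := by
  refine fpfam_ext rfl fun i₀ z a b => ?_
  simp only [toFam]
  by_cases hab : a = b
  · subst hab
    rw [fpIncl_self A i₀ z a rfl]
    simp only [ofFam]
    simp only [dif_pos (@rfl (freeProdN A).carrier (ins A i₀ z a))]
    simp only [Category.assoc, eqToHom_trans, eqToHom_trans_assoc, eqToHom_refl,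
      Category.id_comp, Category.comp_id, Sigma.ι_desc]
    rw [fam_map_congr P i₀ (res_ins A i₀ z a) (ins_self A i₀ z a) (ins_self A i₀ z a)]
    simp
  · have hne : ins A i₀ z a ≠ ins A i₀ z b := fun e =>
      hab (by rw [← ins_self A i₀ z a, ← ins_self A i₀ z b, e])
    have hex : ∃ j, ∀ i, i ≠ j → ins A i₀ z a i = ins A i₀ z b i :=
      ⟨i₀, fun i hi => by rw [ins_ne A i₀ z a hi, ins_ne A i₀ z b hi]⟩
    rw [fpIncl_ne A i₀ z a b hab]
    simp only [ofFam]
    simp only [dif_neg (show ¬ @Eq (freeProdN A).carrier (ins A i₀ z a) (ins A i₀ z b) from hne),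
      dif_pos hex]
    have hch : hex.choose = i₀ := by
      by_contra hc
      exact hab (by
        have := hex.choose_spec i₀ (fun e => hc e.symm)
        rwa [ins_self, ins_self] at this)
    rw [ofFamAux_congr P hch]
    simp only [ofFamAux]
    rw [fam_map_congr P i₀ (res_ins A i₀ z a) (ins_self A i₀ z a) (ins_self A i₀ z b)]
    simp

theorem toFam_comp [HasProducts.{v} V] [HasFiniteCoproducts V] (A : Fin n → VGraph V)
    (B B' : VGraph V) (g : B ⟶ B') (F : freeProdN A ⟶ B) :
    toFam A B' (F ≫ g) = (toFam A B F).post g := by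
  refine fpfam_ext rfl fun i₀ z a b => ?_
  simp [toFam, FPFam.post, comp_map, Category.assoc]
  rfl

end VGraph

/-- for `V` with small products and finite coproducts, morphisms of
`V`-graphs out of the free product `⊛ᵢ Aᵢ` correspond bijectively, naturally in `B`,
to families consisting of an object map together with hom maps in each variable
separately. -/
theorem freeProdN_hom_bijection (V : Type u) [Category.{v} V] [HasProducts.{v} V]
    [HasFiniteCoproducts V] {n : ℕ} (A : Fin n → VGraph V) (B : VGraph V) :
    Function.Bijective (toFam A B) ∧
    ∀ (B' : VGraph V) (g : B ⟶ B') (F : freeProdN A ⟶ B),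
      toFam A B' (F ≫ g) = (toFam A B F).post g := by
  exact ⟨Function.bijective_iff_has_inverse.mpr
    ⟨ofFam A B, fun F => ofFam_toFam A B F, fun P => toFam_ofFam A B P⟩,
    fun B' g F => toFam_comp A B B' g F⟩
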